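/- For any monopoly-free set system (E,F) with |E| = n, any nonnegative cost vector c, and any cheapest feasible set S, it holds that TUmax(c,S) ≤ n·TUmin(c,S); in fact TUmax(c,S) ≤ |S|·TUmin(c,S). -/
import Mathlib


open Finset

/-- A set system `(E, F)` is monopoly-free if no element of the ground set
belongs to every feasible set. -/
def MonopolyFree {E : Type*} (F : Set (Finset E)) : Prop :=
  ∀ e : E, ∃ T ∈ F, e ∉ T

/-- `S` is a cheapest feasible set of the set system `(E, F)` with respect to
the cost vector `c`. -/
def IsCheapest {E : Type*} (F : Set (Finset E)) (c : E → ℝ) (S : Finset E) : Prop :=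
  S ∈ F ∧ ∀ T ∈ F, ∑ e ∈ S, c e ≤ ∑ e ∈ T, c e

/-- Bid vectors satisfying conditions (1), (2) and (3). -/
def BidsNTU {E : Type*} [DecidableEq E] (F : Set (Finset E)) (c : E → ℝ) (S : Finset E) :
    Set (E → ℝ) :=
  {b | (∀ e ∈ S, c e ≤ b e) ∧
       (∀ T ∈ F, ∑ e ∈ S \ T, b e ≤ ∑ e ∈ T \ S, c e) ∧
       (∀ e ∈ S, ∃ T ∈ F, e ∉ T ∧ ∑ e' ∈ S \ T, b e' = ∑ e' ∈ T \ S, c e')}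

/-- Bid vectors satisfying conditions (1*), (2) and (3). -/
def BidsTU {E : Type*} [DecidableEq E] (F : Set (Finset E)) (c : E → ℝ) (S : Finset E) :
    Set (E → ℝ) :=
  {b | (∀ e ∈ S, 0 ≤ b e) ∧
       (∀ T ∈ F, ∑ e ∈ S \ T, b e ≤ ∑ e ∈ T \ S, c e) ∧
       (∀ e ∈ S, ∃ T ∈ F, e ∉ T ∧ ∑ e' ∈ S \ T, b e' = ∑ e' ∈ T \ S, c e')}

noncomputable def NTUmin {E : Type*} [DecidableEq E] (F : Set (Finset E)) (c : E → ℝ)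
    (S : Finset E) : ℝ :=
  sInf ((fun b => ∑ e ∈ S, b e) '' BidsNTU F c S)

noncomputable def NTUmax {E : Type*} [DecidableEq E] (F : Set (Finset E)) (c : E → ℝ)
    (S : Finset E) : ℝ :=
  sSup ((fun b => ∑ e ∈ S, b e) '' BidsNTU F c S)

noncomputable def TUmin {E : Type*} [DecidableEq E] (F : Set (Finset E)) (c : E → ℝ)
    (S : Finset E) : ℝ :=
  sInf ((fun b => ∑ e ∈ S, b e) '' BidsTU F c S)

noncomputable def TUmax {E : Type*} [DecidableEq E] (F : Set (Finset E)) (c : E → ℝ)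
    (S : Finset E) : ℝ :=
  sSup ((fun b => ∑ e ∈ S, b e) '' BidsTU F c S)

theorem tumax_le_card_mul_tumin {E : Type*} [Fintype E] [DecidableEq E]
    (F : Set (Finset E)) (c : E → ℝ) (S : Finset E) (hmf : MonopolyFree F)
    (hc : ∀ e, 0 ≤ c e) (hS : IsCheapest F c S) :
    TUmax F c S ≤ (Fintype.card E : ℝ) * TUmin F c S ∧
      TUmax F c S ≤ (S.card : ℝ) * TUmin F c S := by
  set A := (fun b => ∑ e ∈ S, b e) '' BidsTU F c S with hA
  have hkey : ∀ x ∈ A, ∀ y ∈ A, x ≤ (S.card : ℝ) * y := by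
    rintro x ⟨b, hb, rfl⟩ y ⟨b', hb', rfl⟩
    obtain ⟨hb1, hb2, _⟩ := hb
    obtain ⟨hb'1, _, hb'3⟩ := hb'
    have hpt : ∀ e ∈ S, b e ≤ ∑ e' ∈ S, b' e' := by
      intro e he
      obtain ⟨T, hT, heT, heq⟩ := hb'3 e he
      have h1 : b e ≤ ∑ e' ∈ S \ T, b e' :=
        Finset.single_le_sum (fun i hi => hb1 i (Finset.mem_sdiff.mp hi).1)
          (Finset.mem_sdiff.mpr ⟨he, heT⟩)
      have h2 : ∑ e' ∈ S \ T, b e' ≤ ∑ e' ∈ T \ S, c e' := hb2 T hT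
      have h3 : ∑ e' ∈ S \ T, b' e' ≤ ∑ e' ∈ S, b' e' :=
        Finset.sum_le_sum_of_subset_of_nonneg Finset.sdiff_subset
          (fun i hi _ => hb'1 i hi)
      linarith
    calc ∑ e ∈ S, b e ≤ ∑ _e ∈ S, ∑ e' ∈ S, b' e' := Finset.sum_le_sum hpt
      _ = (S.card : ℝ) * ∑ e' ∈ S, b' e' := by rw [Finset.sum_const, nsmul_eq_mul]
  have hnonneg : ∀ x ∈ A, (0:ℝ) ≤ x := by
    rintro x ⟨b, hb, rfl⟩
    exact Finset.sum_nonneg fun i hi => hb.1 i hi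
  have hmain : TUmax F c S ≤ (S.card : ℝ) * TUmin F c S := by
    rcases A.eq_empty_or_nonempty with hAe | hAne
    · simp only [TUmax, TUmin, ← hA, hAe, Real.sSup_empty, Real.sInf_empty, mul_zero, le_refl]
    · have hinf0 : 0 ≤ sInf A := Real.sInf_nonneg hnonneg
      have hub : ∀ x ∈ A, x ≤ (S.card : ℝ) * sInf A := by
        intro x hx
        rcases Nat.eq_zero_or_pos S.card with hcard | hcard
        · rw [hcard]
          have := hkey x hx x hx
          rw [hcard] at this
          simpa using this
        · have hcpos : (0:ℝ) < (S.card : ℝ) := by exact_mod_cast hcard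
          rw [mul_comm, ← div_le_iff₀ hcpos]
          exact le_csInf hAne fun y hy => (div_le_iff₀ hcpos).mpr
            (by rw [mul_comm]; exact hkey x hx y hy)
      have : sSup A ≤ (S.card : ℝ) * sInf A :=
        Real.sSup_le hub (mul_nonneg (Nat.cast_nonneg _) hinf0)
      simpa [TUmax, TUmin, ← hA] using this
  refine ⟨le_trans hmain ?_, hmain⟩
  have hinf0 : 0 ≤ TUmin F c S := by
    rcases A.eq_empty_or_nonempty with hAe | hAne
    · simp [TUmin, ← hA, hAe, Real.sInf_empty]
    · exact Real.sInf_nonneg hnonneg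
  have hcard : (S.card : ℝ) ≤ (Fintype.card E : ℝ) := by
    exact_mod_cast Finset.card_le_univ S
  exact mul_le_mul_of_nonneg_right hcard hinf0
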